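/- arXiv:1603.06255 — 5 statements merged into one kernel-verified Lean document; each statement's English description precedes it below -/
import Mathlib

section
/- Let Φ be an ergodic OQW on k sites with degree of freedom n. Then the series ∑_{r≥1}(Φ̂^r − Ω̂) converges absolutely, the linear map Id − Φ̂ + Ω̂ on block vectors is invertible, and its inverse equals Id + ∑_{r≥1}(Φ̂^r − Ω̂). -/
open Matrix Filter

noncomputable section

abbrev Mn (n : ℕ) : Type := Matrix (Fin n) (Fin n) ℂ

abbrev BlockVec (n k : ℕ) : Type := Fin k → Mn n

instance (n : ℕ) : NormedAddCommGroup (Mn n) :=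
  { (Matrix.normedAddCommGroup : NormedAddCommGroup (Mn n)) with
    toMetricSpace := (Matrix.normedAddCommGroup : NormedAddCommGroup (Mn n)).toMetricSpace.replaceTopology
      (U := instTopologicalSpaceMatrix) rfl }
instance (n : ℕ) : NormedSpace ℂ (Mn n) := Matrix.normedSpace

/-- An open quantum random walk on `k` sites with degree of freedom `n`:
`∑ i, (B i j)ᴴ (B i j) = 1` for every `j`. -/
def IsOQW {n k : ℕ} (B : Fin k → Fin k → Mn n) : Prop :=
  ∀ j : Fin k, ∑ i : Fin k, (B i j)ᴴ * B i j = 1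

/-- The block representation `Φ̂`: `(Φ̂ ρ) i = ∑ j, B i j * ρ j * (B i j)ᴴ`. -/
def blockRep {n k : ℕ} (B : Fin k → Fin k → Mn n) : Module.End ℂ (BlockVec n k) :=
  LinearMap.pi fun i => ∑ j : Fin k,
    (LinearMap.mulRight ℂ (B i j)ᴴ).comp ((LinearMap.mulLeft ℂ (B i j)).comp (LinearMap.proj j))

/-- The map `Ω̂`: `(Ω̂ ρ) p = (1/(k n)) (∑ j, Tr (ρ j)) • 1` for every `p`. -/
def omegaMap (n k : ℕ) : Module.End ℂ (BlockVec n k) :=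
  LinearMap.pi fun _ =>
    (LinearMap.toSpanSingleton ℂ (Mn n) (((k : ℂ) * (n : ℂ))⁻¹ • (1 : Mn n))).comp
      (∑ j : Fin k, (Matrix.traceLinearMap (Fin n) ℂ ℂ).comp (LinearMap.proj j))

/-- Ergodic OQW: the iterates of the block representation converge to `Ω̂`. -/
def IsErgodic {n k : ℕ} (B : Fin k → Fin k → Mn n) : Prop :=
  ∀ ρ : BlockVec n k,
    Tendsto (fun r : ℕ => (blockRep B ^ r) ρ) atTop (nhds (omegaMap n k ρ))



variable {n k : ℕ} {B : Fin k → Fin k → Mn n}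

lemma cont_end (f : Module.End ℂ (BlockVec n k)) : Continuous f :=
  f.continuous_of_finiteDimensional

lemma phi_omega (herg : IsErgodic B) : blockRep B * omegaMap n k = omegaMap n k := by
  refine LinearMap.ext fun ρ => ?_
  rw [Module.End.mul_apply]
  refine tendsto_nhds_unique ?_ ((herg ρ).comp (tendsto_add_atTop_nat 1))
  have h1 : Tendsto (fun r : ℕ => blockRep B ((blockRep B ^ r) ρ)) atTop
      (nhds (blockRep B (omegaMap n k ρ))) := ((cont_end _).tendsto _).comp (herg ρ)
  refine h1.congr fun r => ?_
  simp [Function.comp, pow_succ', Module.End.mul_apply]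

lemma omega_phi (herg : IsErgodic B) : omegaMap n k * blockRep B = omegaMap n k := by
  refine LinearMap.ext fun ρ => ?_
  rw [Module.End.mul_apply]
  refine tendsto_nhds_unique ?_ ((herg ρ).comp (tendsto_add_atTop_nat 1))
  refine (herg (blockRep B ρ)).congr fun r => ?_
  simp [Function.comp, pow_succ, Module.End.mul_apply]

lemma phi_pow_omega (herg : IsErgodic B) (r : ℕ) :
    blockRep B ^ r * omegaMap n k = omegaMap n k := by
  induction r with
  | zero => simp
  | succ m ih => rw [pow_succ', mul_assoc, ih, phi_omega herg]

lemma omega_phi_pow (herg : IsErgodic B) (r : ℕ) :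
    omegaMap n k * blockRep B ^ r = omegaMap n k := by
  induction r with
  | zero => simp
  | succ m ih => rw [pow_succ, ← mul_assoc, ih, omega_phi herg]

lemma omega_omega (herg : IsErgodic B) :
    omegaMap n k * omegaMap n k = omegaMap n k := by
  refine LinearMap.ext fun ρ => ?_
  rw [Module.End.mul_apply]
  have h1 : Tendsto (fun r : ℕ => omegaMap n k ((blockRep B ^ r) ρ)) atTop
      (nhds (omegaMap n k (omegaMap n k ρ))) := ((cont_end _).tendsto _).comp (herg ρ)
  have h2 : ∀ r : ℕ, omegaMap n k ((blockRep B ^ r) ρ) = omegaMap n k ρ := by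
    intro r
    rw [← Module.End.mul_apply, omega_phi_pow herg]
  refine tendsto_nhds_unique h1 ?_
  simp only [h2]
  exact tendsto_const_nhds

lemma Q_pow (herg : IsErgodic B) (r : ℕ) :
    (blockRep B - omegaMap n k) ^ (r + 1) = blockRep B ^ (r + 1) - omegaMap n k := by
  induction r with
  | zero => simp
  | succ m ih =>
    rw [pow_succ, ih, sub_mul, mul_sub, mul_sub, ← pow_succ, phi_pow_omega herg,
      omega_phi herg, omega_omega herg]
    abel

lemma tendsto_opNorm_of_pointwise {E : Type*} [NormedAddCommGroup E] [NormedSpace ℂ E]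
    [FiniteDimensional ℂ E] (T : ℕ → E →L[ℂ] E)
    (h : ∀ x : E, Tendsto (fun r => T r x) atTop (nhds 0)) :
    Tendsto (fun r => ‖T r‖) atTop (nhds 0) := by
  classical
  set b := Module.finBasis ℂ E with hb
  set J : (E →L[ℂ] E) →ₗ[ℂ] (Fin (Module.finrank ℂ E) → E) :=
    LinearMap.pi (fun i =>
      { toFun := fun S => S (b i)
        map_add' := by intro x y; rfl
        map_smul' := by intro c x; rfl }) with hJdef
  have hJ : Function.Injective J := by
    intro S S' hSS
    have hb' : ∀ i, S (b i) = S' (b i) := fun i => congrFun hSS i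
    have : S.toLinearMap = S'.toLinearMap := Module.Basis.ext b hb'
    exact ContinuousLinearMap.coe_injective this
  set eL := LinearEquiv.ofInjective J hJ with heL
  set eC := eL.toContinuousLinearEquiv with heC
  have h1 : Tendsto (fun r => J (T r)) atTop (nhds 0) := by
    rw [tendsto_pi_nhds]
    intro i
    exact h (b i)
  have h2 : Tendsto (fun r => eL (T r)) atTop (nhds 0) := by
    rw [Topology.IsEmbedding.subtypeVal.tendsto_nhds_iff]
    exact h1
  have h3 : Tendsto (fun r => T r) atTop (nhds 0) := by
    have h4 := (eC.symm.continuous.tendsto 0).comp h2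
    simp only [map_zero] at h4
    refine h4.congr fun r => ?_
    show eC.symm (eL (T r)) = T r
    exact eC.symm_apply_apply (T r)
  simpa using h3.norm

lemma summable_norm_pow_of_tendsto {A : Type*} [NormedRing A] [NormOneClass A] {x : A}
    (h : Tendsto (fun r : ℕ => ‖x ^ r‖) atTop (nhds 0)) :
    Summable (fun r : ℕ => ‖x ^ r‖) := by
  obtain ⟨N, hN1, hNlt⟩ : ∃ N : ℕ, 1 ≤ N ∧ ‖x ^ N‖ < 2⁻¹ := by
    have hev := (h.eventually (gt_mem_nhds (by norm_num : (0:ℝ) < 2⁻¹))).and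
      (eventually_ge_atTop 1)
    obtain ⟨N, hN⟩ := hev.exists
    exact ⟨N, hN.2, hN.1⟩
  haveI : NeZero N := ⟨by omega⟩
  set c : ℝ := ‖x ^ N‖ with hc
  have hc0 : 0 ≤ c := norm_nonneg _
  have hc1 : c < 1 := lt_trans hNlt (by norm_num)
  set M : ℝ := ∑ s : Fin N, ‖x ^ (s : ℕ)‖ with hM
  have hMle : ∀ s : Fin N, ‖x ^ (s : ℕ)‖ ≤ M := fun s =>
    Finset.single_le_sum (f := fun s : Fin N => ‖x ^ (s : ℕ)‖)
      (fun _ _ => norm_nonneg _) (Finset.mem_univ s)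
  have hbound : Summable (fun p : ℕ × Fin N => c ^ p.1 * M) := by
    have h1 : Summable (fun p : Fin N × ℕ => c ^ p.2 * M) := by
      refine (summable_prod_of_nonneg ?_).2 ⟨fun s => ?_, ?_⟩
      · intro p
        exact mul_nonneg (pow_nonneg hc0 _) (le_trans (norm_nonneg _) (hMle 0))
      · exact (summable_geometric_of_lt_one hc0 hc1).mul_right M
      · exact Summable.of_finite
    exact (Equiv.prodComm (ℕ) (Fin N)).symm.summable_iff.1 h1
  have key : Summable ((fun r : ℕ => ‖x ^ r‖) ∘ (Nat.divModEquiv N).symm) := by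
    refine Summable.of_nonneg_of_le (fun _ => norm_nonneg _) ?_ hbound
    rintro ⟨q, s⟩
    show ‖x ^ (q * N + (s : ℕ))‖ ≤ c ^ q * M
    calc ‖x ^ (q * N + (s : ℕ))‖ = ‖(x ^ N) ^ q * x ^ (s : ℕ)‖ := by
          rw [pow_add, mul_comm q N, pow_mul]
      _ ≤ ‖(x ^ N) ^ q‖ * ‖x ^ (s : ℕ)‖ := norm_mul_le _ _
      _ ≤ c ^ q * M := by
          refine mul_le_mul ?_ (hMle s) (norm_nonneg _) (pow_nonneg hc0 _)
          rcases Nat.eq_zero_or_pos q with hq | hq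
          · simp [hq]
          · exact norm_pow_le' _ hq
  exact (Nat.divModEquiv N).symm.summable_iff.1 key

lemma geom_left_right {A : Type*} [NormedRing A] [CompleteSpace A] {x : A}
    (hs : Summable fun r : ℕ => ‖x ^ r‖) :
    (1 - x) * (∑' r : ℕ, x ^ r) = 1 ∧ (∑' r : ℕ, x ^ r) * (1 - x) = 1 := by
  have hsum : Summable (fun r : ℕ => x ^ r) := hs.of_norm
  have hx0 : Tendsto (fun r : ℕ => x ^ r) atTop (nhds 0) := by
    exact tendsto_zero_iff_norm_tendsto_zero.2 hs.tendsto_atTop_zero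
  have hsub : Summable (fun r : ℕ => x ^ r - x ^ (r + 1)) :=
    hsum.sub ((summable_nat_add_iff 1).2 hsum)
  have htel : HasSum (fun r : ℕ => x ^ r - x ^ (r + 1)) 1 := by
    rw [hsub.hasSum_iff_tendsto_nat]
    have : ∀ m : ℕ, ∑ i ∈ Finset.range m, (x ^ i - x ^ (i + 1)) = x ^ 0 - x ^ m :=
      fun m => Finset.sum_range_sub' (fun i => x ^ i) m
    simp only [this, pow_zero]
    simpa using tendsto_const_nhds.sub hx0
  constructor
  · have h1 : HasSum (fun r : ℕ => (1 - x) * x ^ r) ((1 - x) * ∑' r : ℕ, x ^ r) :=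
      hsum.hasSum.mul_left _
    have h2 : (fun r : ℕ => (1 - x) * x ^ r) = fun r : ℕ => x ^ r - x ^ (r + 1) := by
      funext r; rw [sub_mul, one_mul, ← pow_succ']
    rw [h2] at h1
    exact h1.unique htel
  · have h1 : HasSum (fun r : ℕ => x ^ r * (1 - x)) ((∑' r : ℕ, x ^ r) * (1 - x)) :=
      hsum.hasSum.mul_right _
    have h2 : (fun r : ℕ => x ^ r * (1 - x)) = fun r : ℕ => x ^ r - x ^ (r + 1) := by
      funext r; rw [mul_sub, mul_one, ← pow_succ]
    rw [h2] at h1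
    exact h1.unique htel


set_option maxHeartbeats 1000000 in
/-- For an ergodic OQW, the series `∑_{r ≥ 1} (Φ̂^r - Ω̂)` converges absolutely
(entrywise), the map `Id - Φ̂ + Ω̂` is invertible, and its inverse equals
`Id + ∑_{r ≥ 1} (Φ̂^r - Ω̂)`. -/
theorem fundamentalMatrix_exists {n k : ℕ} (hn : 1 ≤ n) (hk : 1 ≤ k)
    (B : Fin k → Fin k → Mn n) (hB : IsOQW B) (herg : IsErgodic B) :
    (∀ (ρ : BlockVec n k) (i : Fin k) (a b : Fin n),
      Summable fun r : ℕ =>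
        ‖((blockRep B ^ (r + 1)) ρ i - omegaMap n k ρ i) a b‖) ∧
    IsUnit (1 - blockRep B + omegaMap n k) ∧
    ∀ ρ : BlockVec n k,
      Ring.inverse (1 - blockRep B + omegaMap n k) ρ =
        ρ + ∑' r : ℕ, ((blockRep B ^ (r + 1)) ρ - omegaMap n k ρ) := by
  haveI : Nontrivial (Mn n) := by
    refine ⟨0, 1, fun h => ?_⟩
    haveI : Nonempty (Fin n) := ⟨⟨0, hn⟩⟩
    exact zero_ne_one h
  haveI : Nontrivial (BlockVec n k) := by
    refine ⟨0, fun _ => 1, fun h => ?_⟩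
    have := congrFun h ⟨0, hk⟩
    exact zero_ne_one this
  set E := BlockVec n k
  set Q : Module.End ℂ E := blockRep B - omegaMap n k with hQ
  set Q' : E →L[ℂ] E := LinearMap.toContinuousLinearMap Q with hQ'
  have hQ'apply : ∀ x : E, Q' x = Q x := fun _ => rfl
  have hpowapp : ∀ (r : ℕ) (x : E), (Q' ^ r) x = (Q ^ r) x := by
    intro r
    induction r with
    | zero => intro x; rfl
    | succ m ih =>
      intro x
      rw [pow_succ, pow_succ, ContinuousLinearMap.mul_apply, Module.End.mul_apply,
        hQ'apply, ih]
  have htend : ∀ x : E, Tendsto (fun r : ℕ => (Q' ^ r) x) atTop (nhds 0) := by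
    intro x
    have base : Tendsto (fun r : ℕ => (blockRep B ^ r) x - omegaMap n k x) atTop (nhds 0) := by
      have hc : Tendsto (fun _ : ℕ => omegaMap n k x) atTop (nhds (omegaMap n k x)) :=
        tendsto_const_nhds
      have h := (herg x).sub hc
      rw [sub_self] at h
      exact h
    refine base.congr' ?_
    filter_upwards [eventually_ge_atTop 1] with r hr
    obtain ⟨m, rfl⟩ : ∃ m, r = m + 1 := ⟨r - 1, by omega⟩
    rw [hpowapp, Q_pow herg m, LinearMap.sub_apply]
  have hnorm0 : Tendsto (fun r : ℕ => ‖Q' ^ r‖) atTop (nhds 0) :=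
    tendsto_opNorm_of_pointwise _ htend
  have hsummable : Summable fun r : ℕ => ‖Q' ^ r‖ := summable_norm_pow_of_tendsto hnorm0
  have hsum : Summable fun r : ℕ => Q' ^ r := hsummable.of_norm
  obtain ⟨hleft, hright⟩ := geom_left_right hsummable
  set S : E →L[ℂ] E := ∑' r : ℕ, Q' ^ r with hS
  -- transfer to End
  have h1 : (1 - Q) * (S : Module.End ℂ E) = 1 := by
    refine LinearMap.ext fun x => ?_
    have := congrArg (fun T : E →L[ℂ] E => T x) hleft
    simpa [ContinuousLinearMap.mul_apply, Module.End.mul_apply, hQ'apply,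
      ContinuousLinearMap.sub_apply, LinearMap.sub_apply] using this
  have h2 : (S : Module.End ℂ E) * (1 - Q) = 1 := by
    refine LinearMap.ext fun x => ?_
    have := congrArg (fun T : E →L[ℂ] E => T x) hright
    simpa [ContinuousLinearMap.mul_apply, Module.End.mul_apply, hQ'apply,
      ContinuousLinearMap.sub_apply, LinearMap.sub_apply] using this
  have hco : 1 - blockRep B + omegaMap n k = 1 - Q := by rw [hQ, sub_add]
  have hshift : Summable fun r : ℕ => ‖Q' ^ (r + 1)‖ := (summable_nat_add_iff 1).2 hsummable
  have hQpt : ∀ (ρ : E) (r : ℕ),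
      (blockRep B ^ (r + 1)) ρ - omegaMap n k ρ = (Q' ^ (r + 1)) ρ := by
    intro ρ r
    rw [hpowapp, Q_pow herg r, LinearMap.sub_apply]
  refine ⟨?_, ?_, ?_⟩
  · intro ρ i a b
    refine Summable.of_nonneg_of_le (fun _ => norm_nonneg _)
      (fun r => ?_) (hshift.mul_right ‖ρ‖)
    have e1 : (blockRep B ^ (r + 1)) ρ i - omegaMap n k ρ i = ((Q' ^ (r + 1)) ρ) i := by
      rw [← hQpt ρ r]; rfl
    rw [e1]
    calc ‖((Q' ^ (r + 1)) ρ) i a b‖ ≤ ‖((Q' ^ (r + 1)) ρ) i‖ :=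
          Matrix.norm_entry_le_entrywise_sup_norm _
      _ ≤ ‖(Q' ^ (r + 1)) ρ‖ := norm_le_pi_norm _ i
      _ ≤ ‖Q' ^ (r + 1)‖ * ‖ρ‖ := ContinuousLinearMap.le_opNorm _ _
  · rw [hco]
    exact ⟨⟨1 - Q, (S : Module.End ℂ E), h1, h2⟩, rfl⟩
  · intro ρ
    rw [hco]
    have hu : Ring.inverse (1 - Q) = (S : Module.End ℂ E) := by
      have : (1 - Q) = ((⟨1 - Q, (S : Module.End ℂ E), h1, h2⟩ : (Module.End ℂ E)ˣ) : Module.End ℂ E) := rfl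
      rw [this, Ring.inverse_unit]
      rfl
    rw [hu]
    have hSρ : (S : Module.End ℂ E) ρ = ∑' r : ℕ, (Q' ^ r) ρ := by
      have := (ContinuousLinearMap.apply ℂ E ρ).map_tsum hsum
      simpa using this
    rw [hSρ]
    have hpt : Summable fun r : ℕ => (Q' ^ r) ρ := by
      have := hsum.map (ContinuousLinearMap.apply ℂ E ρ).toLinearMap
        (ContinuousLinearMap.apply ℂ E ρ).continuous
      exact this
    rw [hpt.tsum_eq_zero_add]
    simp only [pow_zero, ContinuousLinearMap.one_apply]
    congr 1
    exact tsum_congr fun r => (hQpt ρ r).symm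

end
end

section
/- Let R be a (not necessarily commutative) unital ring, k ≥ 1, and let Φ, Ω, Z, K be k×k matrices over R such that: ΦΩ = ΩΦ = Ω, Ω² = Ω, all entries of Ω are equal (Ω_{ij} = Ω_{11} for all i,j), and Z(I − Φ + Ω) = (I − Φ + Ω)Z = I. Let D be the diagonal part of K, N := K − D, and L := K − NΦ. Then for all i,j: N_{ij} = (DZ)_{ii} − (DZ)_{ij} + (LZ)_{ij} − (LZ)_{ii}. -/
open Matrix

noncomputable section

/-- The block-matrix identity underlying the Mean Hitting Time Formula for OQWs
(Lemma 5.2).  `R` is a unital ring; `Φ, Ω, Z, K` are `k × k` matrices over `R` with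
`ΦΩ = ΩΦ = Ω`, `Ω² = Ω`, all entries of `Ω` equal, and `Z` a two-sided inverse of
`I - Φ + Ω`.  With `D` the diagonal part of `K`, `N := K - D` and `L := K - NΦ`,
one has `N_{ij} = (DZ)_{ii} - (DZ)_{ij} + (LZ)_{ij} - (LZ)_{ii}`. -/
theorem mean_hitting_block_identity {R : Type*} [Ring R] {k : ℕ} (hk : 1 ≤ k)
    (Φ Ω Z K : Matrix (Fin k) (Fin k) R)
    (h1 : Φ * Ω = Ω) (h2 : Ω * Φ = Ω) (h3 : Ω * Ω = Ω)
    (h4 : ∀ i j i' j' : Fin k, Ω i j = Ω i' j')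
    (h5 : Z * (1 - Φ + Ω) = 1) (h6 : (1 - Φ + Ω) * Z = 1) :
    ∀ i j : Fin k,
      (K - Matrix.diagonal fun t => K t t) i j =
        ((Matrix.diagonal fun t => K t t) * Z) i i -
        ((Matrix.diagonal fun t => K t t) * Z) i j +
        (((K - (K - Matrix.diagonal fun t => K t t) * Φ) * Z) i j -
         ((K - (K - Matrix.diagonal fun t => K t t) * Φ) * Z) i i) := by
  intro i j
  set D := Matrix.diagonal fun t => K t t with hD
  set N := K - D with hN
  have hΩZ : Ω * Z = Ω := by
    have hΩ1 : Ω * (1 - Φ + Ω) = Ω := by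
      rw [mul_add, mul_sub, mul_one, h2, h3]; abel
    calc Ω * Z = (Ω * (1 - Φ + Ω)) * Z := by rw [hΩ1]
      _ = Ω * ((1 - Φ + Ω) * Z) := by rw [mul_assoc]
      _ = Ω := by rw [h6, mul_one]
  have hZ : Z - Φ * Z = 1 - Ω := by
    have h6' := h6
    rw [add_mul, sub_mul, one_mul, hΩZ] at h6'
    exact eq_sub_of_add_eq h6'
  have hK : K = D + N := by rw [hN]; abel
  have hL : (K - N * Φ) * Z = D * Z + N - N * Ω := by
    have h7 : N * Z - N * (Φ * Z) = N - N * Ω := by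
      rw [← mul_sub, hZ, mul_sub, mul_one]
    calc (K - N * Φ) * Z = (D + N) * Z - N * (Φ * Z) := by
          rw [← hK, sub_mul, mul_assoc]
      _ = D * Z + (N * Z - N * (Φ * Z)) := by rw [add_mul]; abel
      _ = D * Z + (N - N * Ω) := by rw [h7]
      _ = D * Z + N - N * Ω := by abel
  have e1 : ∀ a b : Fin k, ((K - N * Φ) * Z) a b
      = (D * Z) a b + N a b - (N * Ω) a b := by
    intro a b
    rw [hL]
    simp [Matrix.add_apply, Matrix.sub_apply]
  have hΩc : (N * Ω) i j = (N * Ω) i i := by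
    simp only [Matrix.mul_apply]
    exact Finset.sum_congr rfl fun t _ => by rw [h4 t j t i]
  have hNii : N i i = 0 := by simp [hN, hD, Matrix.sub_apply]
  rw [e1, e1, hΩc, hNii]
  abel

end
end

section
/- Let Φ be an OQW on k sites with degree of freedom n whose mean hitting/return time series all converge absolutely and for which every hitting probability is one, i.e. h_{il}(σ) = Tr σ for all sites i ≠ l and all positive semidefinite σ. Then for all sites i, j and every positive semidefinite ρ ∈ M_n(ℂ): Tr(k̂_{ij}(ρ)) = Tr(ρ) + ∑_{l ≠ i} Tr(k̂_{il}((B l j) ρ (B l j)ᴴ)). Equivalently, writing K̂ = (k̂_{ij}), D̂ = diag(k̂_{11},…,k̂_{kk}) and L̂ := K̂ − (K̂ − D̂)Φ̂, one has Tr(L̂_{ij}(cρ)) = c·Tr(ρ) for all i, j, all c ∈ ℝ and all positive semidefinite ρ. -/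
open Matrix Filter
open scoped ComplexOrder

noncomputable section

/-- The product `B (x r) (x (r-1)) * ⋯ * B (x 1) (x 0)` along a path `x`. -/
def pathProd {n k : ℕ} (B : Fin k → Fin k → Mn n) : (r : ℕ) → (Fin (r+1) → Fin k) → Mn n
  | 0, _ => 1
  | r+1, x => B (x (Fin.last (r+1))) (x (Fin.last r).castSucc) *
      pathProd B r (fun s => x s.castSucc)

/-- The index set of `π(i ← j; r)`: paths `x_0 = j, x_1, …, x_r = i` with `x_s ≠ i`
for `1 ≤ s ≤ r - 1`. -/
def pathsSet (k : ℕ) (i j : Fin k) (r : ℕ) : Finset (Fin (r+1) → Fin k) :=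
  Finset.univ.filter fun x => x 0 = j ∧ x (Fin.last r) = i ∧
    ∀ s : Fin (r+1), s ≠ 0 → s ≠ Fin.last r → x s ≠ i

/-- The mean hitting time operator `k̂_{ij}(X) = ∑_{r ≥ 1} r ∑_{C ∈ π(i←j;r)} C X Cᴴ`
(mean return time operator when `i = j`). -/
def khat {n k : ℕ} (B : Fin k → Fin k → Mn n) (i j : Fin k) (X : Mn n) : Mn n :=
  ∑' r : ℕ, ((r + 1 : ℕ) : ℂ) • ∑ x ∈ pathsSet k i j (r+1),
    pathProd B (r+1) x * X * (pathProd B (r+1) x)ᴴ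

/-- The hitting probability `h_{ij}(σ) = ∑_{r ≥ 1} ∑_{C ∈ π(i←j;r)} Tr(C σ Cᴴ)`. -/
def hitSum {n k : ℕ} (B : Fin k → Fin k → Mn n) (i j : Fin k) (σ : Mn n) : ℂ :=
  ∑' r : ℕ, ∑ x ∈ pathsSet k i j (r+1),
    (pathProd B (r+1) x * σ * (pathProd B (r+1) x)ᴴ).trace

/-- The `(i,j)` block of an operator on block vectors. -/
def blockOf {n k : ℕ} (T : Module.End ℂ (BlockVec n k)) (i j : Fin k) (X : Mn n) : Mn n :=
  T (Pi.single j X) i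

lemma pathProd_succ_left {n k : ℕ} (B : Fin k → Fin k → Mn n) :
    ∀ (r : ℕ) (x : Fin (r+2) → Fin k),
      pathProd B (r+1) x = pathProd B r (fun s => x s.succ) * B (x 1) (x 0) := by
  intro r
  induction r with
  | zero =>
    intro x
    show B (x (Fin.last 1)) (x (Fin.last 0).castSucc) * 1 = 1 * B (x 1) (x 0)
    rw [mul_one, one_mul]
    rfl
  | succ r ih =>
    intro x
    show B (x (Fin.last (r+2))) (x (Fin.last (r+1)).castSucc) *
        pathProd B (r+1) (fun s => x s.castSucc) = _
    rw [ih (fun s => x s.castSucc)]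
    show _ * (pathProd B r (fun s => x (s.succ.castSucc)) * B (x ((1:Fin (r+2)).castSucc)) (x ((0:Fin (r+2)).castSucc))) = _
    have h1 : ((1:Fin (r+2)).castSucc) = (1 : Fin (r+3)) := rfl
    have h0 : ((0:Fin (r+2)).castSucc) = (0 : Fin (r+3)) := rfl
    rw [h1, h0, ← mul_assoc]
    simp only [pathProd, Fin.succ_castSucc, Fin.succ_last]

lemma pathsSet_one (k : ℕ) (i j : Fin k) :
    pathsSet k i j 1 = {Fin.cons (α := fun _ => Fin k) j (fun _ => i)} := by
  ext x
  simp only [pathsSet, Finset.mem_filter, Finset.mem_univ, true_and, Finset.mem_singleton]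
  constructor
  · rintro ⟨h0, h1, -⟩
    funext s
    fin_cases s
    · simpa using h0
    · simpa using h1
  · rintro rfl
    refine ⟨rfl, rfl, ?_⟩
    intro s hs0 hs1
    exfalso
    fin_cases s
    · exact hs0 rfl
    · exact hs1 rfl

lemma sum_pathsSet_one {n k : ℕ} (B : Fin k → Fin k → Mn n) (i j : Fin k) (X : Mn n) :
    ∑ x ∈ pathsSet k i j 1, pathProd B 1 x * X * (pathProd B 1 x)ᴴ
      = B i j * X * (B i j)ᴴ := by
  rw [pathsSet_one, Finset.sum_singleton]
  have : pathProd B 1 (Fin.cons (α := fun _ => Fin k) j (fun _ : Fin 1 => i)) = B i j := by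
    show B _ _ * 1 = B i j
    rw [mul_one]
    rfl
  rw [this]

lemma pathsSet_succ_eq (k : ℕ) (i j : Fin k) (m : ℕ) :
    pathsSet k i j (m+2) = (Finset.univ.erase i).biUnion
      (fun l => (pathsSet k i l (m+1)).image (Fin.cons (α := fun _ => Fin k) j)) := by
  ext x
  simp only [pathsSet, Finset.mem_filter, Finset.mem_univ, true_and, Finset.mem_biUnion,
    Finset.mem_erase, Finset.mem_image]
  constructor
  · rintro ⟨h0, hl, hmid⟩
    have h1ne0 : (1 : Fin (m+3)) ≠ 0 := by simp [Fin.ext_iff]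
    have h1nelast : (1 : Fin (m+3)) ≠ Fin.last (m+2) := by
      simp [Fin.ext_iff, Fin.last]
    refine ⟨x 1, ⟨hmid 1 h1ne0 h1nelast, trivial⟩, Fin.tail x, ⟨?_, ?_, ?_⟩, ?_⟩
    · show x ((0 : Fin (m+2)).succ) = x 1
      rw [Fin.succ_zero_eq_one]
    · show x ((Fin.last (m+1)).succ) = i
      rw [Fin.succ_last]; exact hl
    · intro t ht0 htl
      show x t.succ ≠ i
      refine hmid t.succ (Fin.succ_ne_zero t) ?_
      intro hc
      apply htl
      have := Fin.succ_injective _ (hc.trans (Fin.succ_last (m+1)).symm)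
      exact this
    · rw [← h0]
      exact Fin.cons_self_tail x
  · rintro ⟨l, ⟨hli, -⟩, y, ⟨hy0, hyl, hymid⟩, rfl⟩
    refine ⟨Fin.cons_zero _ _, ?_, ?_⟩
    · rw [← Fin.succ_last, Fin.cons_succ]
      exact hyl
    · intro s hs0 hslast
      induction s using Fin.cases with
      | zero => exact absurd rfl hs0
      | succ t =>
        rw [Fin.cons_succ]
        rcases eq_or_ne t 0 with rfl | ht0
        · rw [hy0]; exact hli
        · refine hymid t ht0 ?_
          intro hc
          exact hslast (by rw [hc, Fin.succ_last])

lemma sum_pathsSet_succ {n k : ℕ} (B : Fin k → Fin k → Mn n) (i j : Fin k) (m : ℕ) (X : Mn n) :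
    ∑ x ∈ pathsSet k i j (m+2), pathProd B (m+2) x * X * (pathProd B (m+2) x)ᴴ
      = ∑ l ∈ Finset.univ.erase i, ∑ y ∈ pathsSet k i l (m+1),
          pathProd B (m+1) y * (B l j * X * (B l j)ᴴ) * (pathProd B (m+1) y)ᴴ := by
  rw [pathsSet_succ_eq]
  rw [Finset.sum_biUnion]
  · refine Finset.sum_congr rfl fun l hl => ?_
    rw [Finset.sum_image (fun a _ b _ h => Fin.cons_right_injective (α := fun _ => Fin k) j h)]
    refine Finset.sum_congr rfl fun y hy => ?_
    have hy0 : y 0 = l := by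
      simp only [pathsSet, Finset.mem_filter] at hy
      exact hy.2.1
    have hprod : pathProd B (m+2) (Fin.cons (α := fun _ => Fin k) j y)
        = pathProd B (m+1) y * B l j := by
      rw [pathProd_succ_left]
      have ht : (fun s : Fin (m+2) => Fin.cons (α := fun _ => Fin k) j y s.succ) = y :=
        funext fun s => Fin.cons_succ (α := fun _ => Fin k) j y s
      rw [ht, show (1 : Fin (m+3)) = (0 : Fin (m+2)).succ from (Fin.succ_zero_eq_one).symm,
          Fin.cons_succ, hy0, Fin.cons_zero]
    rw [hprod]
    simp only [conjTranspose_mul, mul_assoc]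
  · intro l hl l' hl' hne
    simp only [Finset.disjoint_left, Finset.mem_image]
    rintro x ⟨y, hy, rfl⟩ ⟨y', hy', hc⟩
    have := Fin.cons_right_injective (α := fun _ => Fin k) j hc.symm
    apply hne
    subst this
    simp only [pathsSet, Finset.mem_filter] at hy hy'
    exact hy.2.1.symm.trans hy'.2.1

abbrev Smat {n k : ℕ} (B : Fin k → Fin k → Mn n) (i j : Fin k) (m : ℕ) (X : Mn n) : Mn n :=
  ∑ x ∈ pathsSet k i j m, pathProd B m x * X * (pathProd B m x)ᴴ

lemma trace_tsum_eq {n : ℕ} {F : ℕ → Mn n} (hF : ∀ a b, Summable fun r => F r a b) :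
    (∑' r, F r).trace = ∑' r, (F r).trace := by
  have hFs : Summable F := Pi.summable.2 fun a => Pi.summable.2 fun b => hF a b
  have h1 : ∀ a : Fin n, (∑' r, F r) a a = ∑' r, F r a a := by
    intro a
    erw [tsum_apply hFs, tsum_apply (Pi.summable.1 hFs a)]
  simp only [Matrix.trace, Matrix.diag]
  rw [Finset.sum_congr rfl fun a _ => h1 a, ← Summable.tsum_finsetSum (fun a _ => hF a a)]

lemma entry_summable {n k : ℕ} (B : Fin k → Fin k → Mn n) (i j : Fin k) (X : Mn n)
    (h : ∀ a b : Fin n, Summable fun r : ℕ => ((r + 1 : ℕ) : ℝ) * ‖(Smat B i j (r+1) X) a b‖)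
    (a b : Fin n) :
    Summable fun r : ℕ => ((r + 1 : ℕ) : ℂ) * (Smat B i j (r+1) X) a b := by
  refine Summable.of_norm ?_
  have : (fun r : ℕ => ‖((r + 1 : ℕ) : ℂ) * (Smat B i j (r+1) X) a b‖)
      = fun r : ℕ => ((r + 1 : ℕ) : ℝ) * ‖(Smat B i j (r+1) X) a b‖ := by
    funext r
    rw [norm_mul, Complex.norm_natCast]
  rw [this]
  exact h a b

lemma entry_summable' {n k : ℕ} (B : Fin k → Fin k → Mn n) (i j : Fin k) (X : Mn n)
    (h : ∀ a b : Fin n, Summable fun r : ℕ => ((r + 1 : ℕ) : ℝ) * ‖(Smat B i j (r+1) X) a b‖)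
    (a b : Fin n) :
    Summable fun r : ℕ => (Smat B i j (r+1) X) a b := by
  refine Summable.of_norm (Summable.of_nonneg_of_le (fun r => norm_nonneg _) (fun r => ?_) (h a b))
  exact le_mul_of_one_le_left (norm_nonneg _) (by exact_mod_cast Nat.le_add_left 1 r)

lemma trace_khat {n k : ℕ} (B : Fin k → Fin k → Mn n) (i j : Fin k) (X : Mn n)
    (h : ∀ a b : Fin n, Summable fun r : ℕ => ((r + 1 : ℕ) : ℝ) * ‖(Smat B i j (r+1) X) a b‖) :
    (khat B i j X).trace = ∑' r : ℕ, ((r + 1 : ℕ) : ℂ) * (Smat B i j (r+1) X).trace := by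
  have step : (khat B i j X).trace
      = ∑' r : ℕ, (((r + 1 : ℕ) : ℂ) • Smat B i j (r+1) X).trace := by
    refine trace_tsum_eq fun a b => ?_
    have : (fun r : ℕ => (((r + 1 : ℕ) : ℂ) • Smat B i j (r+1) X) a b)
        = fun r : ℕ => ((r + 1 : ℕ) : ℂ) * (Smat B i j (r+1) X) a b := by
      funext r; simp [Matrix.smul_apply]
    rw [this]
    exact entry_summable B i j X h a b
  rw [step]
  exact tsum_congr fun r => by rw [Matrix.trace_smul, smul_eq_mul]

lemma hitSum_eq {n k : ℕ} (B : Fin k → Fin k → Mn n) (i j : Fin k) (σ : Mn n) :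
    hitSum B i j σ = ∑' r : ℕ, (Smat B i j (r+1) σ).trace :=
  tsum_congr fun r => (Matrix.trace_sum _ _).symm

lemma trace_summable {n k : ℕ} (B : Fin k → Fin k → Mn n) (i j : Fin k) (X : Mn n)
    (h : ∀ a b : Fin n, Summable fun r : ℕ => ((r + 1 : ℕ) : ℝ) * ‖(Smat B i j (r+1) X) a b‖) :
    Summable fun r : ℕ => ((r + 1 : ℕ) : ℂ) * (Smat B i j (r+1) X).trace := by
  have : (fun r : ℕ => ((r + 1 : ℕ) : ℂ) * (Smat B i j (r+1) X).trace)
      = fun r : ℕ => ∑ a : Fin n, ((r + 1 : ℕ) : ℂ) * (Smat B i j (r+1) X) a a := by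
    funext r
    rw [Matrix.trace, ← Finset.mul_sum]
    rfl
  rw [this]
  exact summable_sum fun a _ => entry_summable B i j X h a a

lemma trace_summable' {n k : ℕ} (B : Fin k → Fin k → Mn n) (i j : Fin k) (X : Mn n)
    (h : ∀ a b : Fin n, Summable fun r : ℕ => ((r + 1 : ℕ) : ℝ) * ‖(Smat B i j (r+1) X) a b‖) :
    Summable fun r : ℕ => (Smat B i j (r+1) X).trace := by
  have : (fun r : ℕ => (Smat B i j (r+1) X).trace)
      = fun r : ℕ => ∑ a : Fin n, (Smat B i j (r+1) X) a a := by
    funext r; rfl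
  rw [this]
  exact summable_sum fun a _ => entry_summable' B i j X h a a


lemma Smat_smul {n k : ℕ} (B : Fin k → Fin k → Mn n) (i j : Fin k) (m : ℕ) (c : ℂ) (X : Mn n) :
    Smat B i j m (c • X) = c • Smat B i j m X := by
  simp only [Smat, Finset.smul_sum, mul_smul_comm, smul_mul_assoc]

/-- First-step identity for mean hitting times (Lemma `very_usedlater`):
if all mean hitting/return time series converge absolutely and every hitting
probability is one, then for all sites `i, j` and every positive semidefinite `ρ`,
`Tr(k̂_{ij}(ρ)) = Tr(ρ) + ∑_{l ≠ i} Tr(k̂_{il}(B l j ρ (B l j)ᴴ))`; equivalently,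
with `L̂ := K̂ - (K̂ - D̂)Φ̂`, `Tr(L̂_{ij}(c ρ)) = c Tr(ρ)` for every `c ∈ ℝ`. -/
theorem mean_hitting_first_step {n k : ℕ}
    (B : Fin k → Fin k → Mn n) (hB : IsOQW B)
    (hSum : ∀ (i j : Fin k) (X : Mn n) (a b : Fin n),
      Summable fun r : ℕ => ((r + 1 : ℕ) : ℝ) *
        ‖(∑ x ∈ pathsSet k i j (r+1),
            pathProd B (r+1) x * X * (pathProd B (r+1) x)ᴴ) a b‖)
    (hHit : ∀ i l : Fin k, i ≠ l → ∀ σ : Mn n, σ.PosSemidef →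
      hitSum B i l σ = σ.trace) :
    (∀ (i j : Fin k) (ρ : Mn n), ρ.PosSemidef →
      (khat B i j ρ).trace =
        ρ.trace + ∑ l ∈ Finset.univ.erase i,
          (khat B i l (B l j * ρ * (B l j)ᴴ)).trace) ∧
    (∀ (i j : Fin k) (c : ℝ) (ρ : Mn n), ρ.PosSemidef →
      (khat B i j ((c : ℂ) • ρ)).trace -
        ∑ l ∈ Finset.univ.erase i,
          (khat B i l (B l j * ((c : ℂ) • ρ) * (B l j)ᴴ)).trace =
      (c : ℂ) * ρ.trace) := by
  have hSum' : ∀ (i j : Fin k) (X : Mn n) (a b : Fin n),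
      Summable fun r : ℕ => ((r + 1 : ℕ) : ℝ) * ‖(Smat B i j (r+1) X) a b‖ := hSum
  have key : ∀ (i j : Fin k) (ρ : Mn n), ρ.PosSemidef →
      (khat B i j ρ).trace = ρ.trace + ∑ l ∈ Finset.univ.erase i,
        (khat B i l (B l j * ρ * (B l j)ᴴ)).trace := by
    intro i j ρ hρ
    set σ : Fin k → Mn n := fun l => B l j * ρ * (B l j)ᴴ with hσ
    have hσpsd : ∀ l, (σ l).PosSemidef := fun l => hρ.mul_mul_conjTranspose_same (B l j)
    have h0 : (khat B i j ρ).trace = ∑' r : ℕ, ((r+1:ℕ):ℂ) * (Smat B i j (r+1) ρ).trace :=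
      trace_khat B i j ρ (hSum' i j ρ)
    have hsummable := trace_summable B i j ρ (hSum' i j ρ)
    rw [h0, Summable.tsum_eq_zero_add hsummable]
    have hfirst : ((0+1:ℕ):ℂ) * (Smat B i j (0+1) ρ).trace = (B i j * ρ * (B i j)ᴴ).trace := by
      rw [show Smat B i j (0+1) ρ = B i j * ρ * (B i j)ᴴ from sum_pathsSet_one B i j ρ]
      norm_num
    have hdec : ∀ r : ℕ, Smat B i j (r+2) ρ = ∑ l ∈ Finset.univ.erase i, Smat B i l (r+1) (σ l) :=
      fun r => sum_pathsSet_succ B i j r ρ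
    have htail : (∑' r : ℕ, ((r+1+1:ℕ):ℂ) * (Smat B i j (r+1+1) ρ).trace)
        = ∑ l ∈ Finset.univ.erase i,
            ((khat B i l (σ l)).trace + (σ l).trace) := by
      have hcong : ∀ r : ℕ, ((r+1+1:ℕ):ℂ) * (Smat B i j (r+1+1) ρ).trace
          = ∑ l ∈ Finset.univ.erase i,
              (((r+1:ℕ):ℂ) * (Smat B i l (r+1) (σ l)).trace + (Smat B i l (r+1) (σ l)).trace) := by
        intro r
        rw [hdec r, Matrix.trace_sum, Finset.mul_sum]
        refine Finset.sum_congr rfl fun l _ => ?_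
        push_cast
        ring
      rw [tsum_congr hcong, Summable.tsum_finsetSum (fun l _ =>
        Summable.add (trace_summable B i l (σ l) (hSum' i l (σ l)))
          (trace_summable' B i l (σ l) (hSum' i l (σ l))))]
      refine Finset.sum_congr rfl fun l hl => ?_
      rw [Summable.tsum_add (trace_summable B i l (σ l) (hSum' i l (σ l)))
        (trace_summable' B i l (σ l) (hSum' i l (σ l)))]
      congr 1
      · exact (trace_khat B i l (σ l) (hSum' i l (σ l))).symm
      · rw [← hitSum_eq]
        exact hHit i l (Ne.symm (Finset.mem_erase.1 hl).1) (σ l) (hσpsd l)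
    rw [htail, hfirst, Finset.sum_add_distrib]
    have hρtr : (B i j * ρ * (B i j)ᴴ).trace + ∑ l ∈ Finset.univ.erase i, (σ l).trace
        = ρ.trace := by
      have h2 : (σ i).trace + ∑ l ∈ Finset.univ.erase i, (σ l).trace
          = ∑ l : Fin k, (σ l).trace :=
        Finset.add_sum_erase _ (fun l => (σ l).trace) (Finset.mem_univ i)
      have h3 : ∀ l : Fin k, (σ l).trace = ((B l j)ᴴ * B l j * ρ).trace := fun l =>
        Matrix.trace_mul_cycle (B l j) ρ (B l j)ᴴ
      calc (B i j * ρ * (B i j)ᴴ).trace + ∑ l ∈ Finset.univ.erase i, (σ l).trace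
          = ∑ l : Fin k, (σ l).trace := h2
        _ = ∑ l : Fin k, ((B l j)ᴴ * B l j * ρ).trace := Finset.sum_congr rfl fun l _ => h3 l
        _ = (∑ l : Fin k, (B l j)ᴴ * B l j * ρ).trace := (Matrix.trace_sum _ _).symm
        _ = ρ.trace := by rw [← Finset.sum_mul, hB j, one_mul]
    rw [← hρtr]
    ring
  refine ⟨key, ?_⟩
  intro i j c ρ hρ
  have hom : ∀ (i' j' : Fin k) (X : Mn n),
      (khat B i' j' ((c:ℂ) • X)).trace = (c:ℂ) * (khat B i' j' X).trace := by
    intro i' j' X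
    rw [trace_khat B i' j' _ (hSum' i' j' _), trace_khat B i' j' X (hSum' i' j' X),
      ← tsum_mul_left]
    refine tsum_congr fun r => ?_
    rw [Smat_smul B i' j' (r+1) (c:ℂ) X, Matrix.trace_smul, smul_eq_mul]
    ring
  have hb : ∀ l : Fin k, B l j * ((c:ℂ) • ρ) * (B l j)ᴴ = (c:ℂ) • (B l j * ρ * (B l j)ᴴ) := by
    intro l; rw [mul_smul_comm, smul_mul_assoc]
  have hsum_eq : ∑ l ∈ Finset.univ.erase i,
        (khat B i l (B l j * ((c:ℂ) • ρ) * (B l j)ᴴ)).trace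
      = (c:ℂ) * ∑ l ∈ Finset.univ.erase i, (khat B i l (B l j * ρ * (B l j)ᴴ)).trace := by
    rw [Finset.mul_sum]
    refine Finset.sum_congr rfl fun l _ => ?_
    rw [hb l, hom i l (B l j * ρ * (B l j)ᴴ)]
  rw [hsum_eq, hom i j ρ, key i j ρ hρ]
  ring

end
end

section
/- Let L = (1/√2)[[1,1],[0,0]], R = (1/√2)[[0,0],[1,−1]], and consider OQWs on the N-path with repelling borders and interior transitions L (left) and R (right). For the 3-path (sites 1,2,3; transitions: B_{21} = I from site 1, B_{12} = L and B_{32} = R from site 2), the mean hitting time of site 3 starting from site 1 with density ρ is k_{31}(ρ) = ∑_{r≥1} r·∑_{C∈π(3←1;r)} Tr(C ρ Cᴴ) = 4 + 4·Re(ρ_{12}). For the 4-path (sites 1,2,3,4; transitions: B_{21} = I from site 1, B_{12} = L and B_{32} = R from site 2, B_{23} = L and B_{43} = R from site 3), the mean hitting time of site 4 from site 1 is k_{41}(ρ) = 9 + 4·Re(ρ_{12}). -/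
open Matrix
open scoped ComplexOrder

noncomputable section

/-- `L = (1/√2) [[1,1],[0,0]]`. -/
def Lhad : Mn 2 := ((Real.sqrt 2 : ℂ))⁻¹ • !![1, 1; 0, 0]

/-- `R = (1/√2) [[0,0],[1,-1]]`. -/
def Rhad : Mn 2 := ((Real.sqrt 2 : ℂ))⁻¹ • !![0, 0; 1, -1]

/-- Transition matrices for the 3-path with repelling borders:
`B_{21} = I` from site 1, `B_{12} = L` and `B_{32} = R` from site 2;
unlisted transitions are zero.  (Sites 1,2,3 are indexed by `0,1,2`.) -/
def B3 : Fin 3 → Fin 3 → Mn 2 := fun i j =>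
  if i = 1 ∧ j = 0 then 1
  else if i = 0 ∧ j = 1 then Lhad
  else if i = 2 ∧ j = 1 then Rhad
  else 0

/-- Transition matrices for the 4-path: `B_{21} = I` from site 1, `B_{12} = L` and
`B_{32} = R` from site 2, `B_{23} = L` and `B_{43} = R` from site 3; unlisted
transitions are zero.  (Sites 1,2,3,4 are indexed by `0,1,2,3`.) -/
def B4 : Fin 4 → Fin 4 → Mn 2 := fun i j =>
  if i = 1 ∧ j = 0 then 1
  else if i = 0 ∧ j = 1 then Lhad
  else if i = 2 ∧ j = 1 then Rhad
  else if i = 1 ∧ j = 2 then Lhad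
  else if i = 3 ∧ j = 2 then Rhad
  else 0

/-! ### Auxiliary definitions and lemmas -/

def E00 : Mn 2 := !![1,0;0,0]
def E11 : Mn 2 := !![0,0;0,1]

lemma smul_conj_ct (c : ℂ) (M X : Mn 2) :
    (c • M) * X * (c • M)ᴴ = (c * star c) • (M * X * Mᴴ) := by
  simp [Matrix.conjTranspose_smul, smul_mul_assoc, Matrix.mul_smul, smul_smul, mul_comm]

lemma c_mul_c : ((Real.sqrt 2 : ℂ))⁻¹ * star ((Real.sqrt 2 : ℂ))⁻¹ = 1/2 := by
  have hst : star ((Real.sqrt 2 : ℂ)) = ((Real.sqrt 2 : ℂ)) := by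
    simpa using Complex.conj_ofReal (Real.sqrt 2)
  rw [star_inv₀, hst, ← mul_inv]
  have h2 : (Real.sqrt 2 : ℂ) * (Real.sqrt 2 : ℂ) = 2 := by
    norm_cast
    rw [Real.mul_self_sqrt (by norm_num : (0:ℝ) ≤ 2)]
  rw [h2]
  norm_num

lemma Lconj (X : Mn 2) : Lhad * X * Lhadᴴ = ((X 0 0 + X 0 1 + X 1 0 + X 1 1) / 2) • E00 := by
  rw [Lhad, smul_conj_ct, c_mul_c]
  ext i j
  fin_cases i <;> fin_cases j <;>
    simp [E00, Matrix.mul_apply, Matrix.conjTranspose_apply, Fin.sum_univ_two,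
        Matrix.vecMul, dotProduct] <;>
    ring

lemma Rconj (X : Mn 2) : Rhad * X * Rhadᴴ = ((X 0 0 - X 0 1 - X 1 0 + X 1 1) / 2) • E11 := by
  rw [Rhad, smul_conj_ct, c_mul_c]
  ext i j
  fin_cases i <;> fin_cases j <;>
    simp [E11, Matrix.mul_apply, Matrix.conjTranspose_apply, Fin.sum_univ_two,
        Matrix.vecMul, dotProduct] <;>
    ring

def Ssum {k : ℕ} [NeZero k] (B : Fin k → Fin k → Mn 2) (ρ : Mn 2) : ℕ → Fin k → Mn 2
  | 0 => fun j => if j = 0 then ρ else 0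
  | r+1 => fun j => ∑ m, B j m * Ssum B ρ r m * (B j m)ᴴ

lemma Ssum_succ {k : ℕ} [NeZero k] (B : Fin k → Fin k → Mn 2) (ρ : Mn 2) (r : ℕ) :
    Ssum B ρ (r+1) = fun j => ∑ m, B j m * Ssum B ρ r m * (B j m)ᴴ := rfl

lemma pathProd_eq_zero {n k : ℕ} (B : Fin k → Fin k → Mn n) :
    ∀ (r : ℕ) (x : Fin (r+1) → Fin k) (s : Fin r),
      B (x s.succ) (x s.castSucc) = 0 → pathProd B r x = 0
  | r+1, x, s, h => by
    rcases eq_or_ne s (Fin.last r) with rfl | hs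
    · rw [pathProd, show ((Fin.last r).succ) = Fin.last (r+1) from rfl] at *
      rw [h, zero_mul]
    · obtain ⟨s', rfl⟩ := Fin.exists_castSucc_eq.mpr hs
      rw [pathProd, pathProd_eq_zero B r (fun t => x t.castSucc) s' (by
        simp only [Fin.succ_castSucc] at h; exact h), mul_zero]

lemma snoc_zero' {k r : ℕ} (y : Fin (r+1) → Fin k) (m : Fin k) :
    (Fin.snoc y m : Fin (r+2) → Fin k) 0 = y 0 := by
  have h : (0 : Fin (r+2)) = Fin.castSucc 0 := rfl
  rw [h, Fin.snoc_castSucc]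

lemma pathProd_snoc {n k r : ℕ} (B : Fin k → Fin k → Mn n) (y : Fin (r+1) → Fin k) (m : Fin k) :
    pathProd B (r+1) (Fin.snoc y m) = B m (y (Fin.last r)) * pathProd B r y := by
  rw [pathProd]
  have h1 : (Fin.snoc y m : Fin (r+2) → Fin k) (Fin.last (r+1)) = m := by simp
  have h2 : (Fin.snoc y m : Fin (r+2) → Fin k) ((Fin.last r).castSucc) = y (Fin.last r) := by simp
  have h3 : (fun s : Fin (r+1) => (Fin.snoc y m : Fin (r+2) → Fin k) s.castSucc) = y := by
    funext s; simp
  rw [h1, h2, h3]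

/-- Sum over all paths with prescribed endpoints equals `Ssum`. -/
lemma sum_paths_eq_Ssum {k : ℕ} [NeZero k] (B : Fin k → Fin k → Mn 2) (ρ : Mn 2) :
    ∀ (r : ℕ) (j : Fin k),
    ∑ x ∈ Finset.univ.filter (fun x : Fin (r+1) → Fin k => x 0 = 0 ∧ x (Fin.last r) = j),
      pathProd B r x * ρ * (pathProd B r x)ᴴ = Ssum B ρ r j
  | 0, j => by
    rw [Finset.sum_filter,
      ← (Equiv.funUnique (Fin 1) (Fin k)).symm.sum_comp]
    simp only [Equiv.funUnique_symm_apply]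
    by_cases hj : j = 0
    · subst hj
      simp [Ssum, pathProd, Fin.last]
    · simp only [Ssum]
      rw [if_neg hj, Finset.sum_eq_zero]
      intro m _
      rw [if_neg]
      rintro ⟨h1, h2⟩
      exact hj (by rw [← show m = j from h2]; exact show m = 0 from h1)
  | r+1, j => by
    have hcomp := Equiv.sum_comp (Fin.snocEquiv (fun _ : Fin (r+2) => Fin k))
      (fun x : Fin (r+2) → Fin k => if (x 0 = 0 ∧ x (Fin.last (r+1)) = j) then
        pathProd B (r+1) x * ρ * (pathProd B (r+1) x)ᴴ else 0)
    rw [Finset.sum_filter, ← hcomp, Fintype.sum_prod_type]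
    have hsnoc : ∀ (p : Fin k × (Fin (r+1) → Fin k)),
        (Fin.snocEquiv (fun _ : Fin (r+2) => Fin k)) p = Fin.snoc p.2 p.1 :=
      fun p => funext fun i => rfl
    simp only [hsnoc, pathProd_snoc, snoc_zero', Fin.snoc_last]
    set T : Fin k → (Fin (r+1) → Fin k) → Mn 2 := fun m y =>
      B m (y (Fin.last r)) * pathProd B r y * ρ * (B m (y (Fin.last r)) * pathProd B r y)ᴴ
      with hT
    have stepA : ∀ m : Fin k,
        (∑ y : Fin (r+1) → Fin k, if (y 0 = 0 ∧ m = j) then T m y else 0)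
        = if m = j then (∑ y : Fin (r+1) → Fin k, if y 0 = 0 then T m y else 0) else 0 := by
      intro m
      by_cases hm : m = j
      · simp [hm]
      · simp [hm]
    calc (∑ m : Fin k, ∑ y : Fin (r+1) → Fin k, if (y 0 = 0 ∧ m = j) then T m y else 0)
        = ∑ m : Fin k, if m = j then
            (∑ y : Fin (r+1) → Fin k, if y 0 = 0 then T m y else 0) else 0 := by
          exact Finset.sum_congr rfl fun m _ => stepA m
      _ = ∑ y : Fin (r+1) → Fin k, if y 0 = 0 then T j y else 0 := by
          rw [Finset.sum_ite_eq' Finset.univ j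
            (fun m => ∑ y : Fin (r+1) → Fin k, if y 0 = 0 then T m y else 0)]
          simp
      _ = ∑ y : Fin (r+1) → Fin k, ∑ m : Fin k, if (y 0 = 0 ∧ y (Fin.last r) = m) then
            B j m * (pathProd B r y * ρ * (pathProd B r y)ᴴ) * (B j m)ᴴ else 0 := by
          refine Finset.sum_congr rfl fun y _ => ?_
          by_cases h0 : y 0 = 0
          · simp [h0, Finset.sum_ite_eq, hT, Matrix.conjTranspose_mul, Matrix.mul_assoc]
          · simp [h0]
      _ = ∑ m : Fin k, B j m * Ssum B ρ r m * (B j m)ᴴ := by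
          rw [Finset.sum_comm]
          refine Finset.sum_congr rfl fun m _ => ?_
          rw [← sum_paths_eq_Ssum B ρ r m, Finset.sum_filter, Finset.mul_sum, Finset.sum_mul]
          refine Finset.sum_congr rfl fun y _ => ?_
          by_cases h : y 0 = 0 ∧ y (Fin.last r) = m <;> simp [h]
      _ = Ssum B ρ (r+1) j := by rw [Ssum]

lemma sum_pathsSet_eq {k : ℕ} [NeZero k] (B : Fin k → Fin k → Mn 2) (ρ : Mn 2)
    (i : Fin k) (hB : ∀ m, B m i = 0) (r : ℕ) :
    ∑ x ∈ pathsSet k i 0 r, pathProd B r x * ρ * (pathProd B r x)ᴴ = Ssum B ρ r i := by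
  rw [← sum_paths_eq_Ssum B ρ r i]
  apply Finset.sum_subset
  · intro x hx
    simp only [pathsSet, Finset.mem_filter] at hx ⊢
    exact ⟨hx.1, hx.2.1, hx.2.2.1⟩
  · intro x hx hnx
    simp only [Finset.mem_filter] at hx
    simp only [pathsSet, Finset.mem_filter] at hnx
    push_neg at hnx
    obtain ⟨s, hs0, hsl, hxs⟩ := hnx (Finset.mem_univ x) hx.2.1 hx.2.2
    obtain ⟨s', rfl⟩ := Fin.exists_castSucc_eq.mpr hsl
    rw [pathProd_eq_zero B r x s' (by rw [show x s'.castSucc = i from hxs]; exact hB _)]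
    simp

/-! ### Closed forms for the 3-path -/

def uu (ρ : Mn 2) : ℂ := (ρ 0 0 + ρ 0 1 + ρ 1 0 + ρ 1 1)/2
def vv (ρ : Mn 2) : ℂ := (ρ 0 0 - ρ 0 1 - ρ 1 0 + ρ 1 1)/2
def ww (ρ : Mn 2) : ℂ := uu ρ + vv ρ / 2

section closed
variable (ρ : Mn 2)

lemma S3_one : Ssum B3 ρ 1 = ![(0 : Mn 2), ρ, 0] := by
  rw [show (1:ℕ) = 0+1 from rfl, Ssum_succ]
  funext j
  fin_cases j <;>
    simp [Ssum, Fin.sum_univ_three, show B3 0 0 = 0 from rfl, show B3 0 1 = Lhad from rfl,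
      show B3 0 2 = 0 from rfl, show B3 1 0 = 1 from rfl, show B3 1 1 = 0 from rfl,
      show B3 1 2 = 0 from rfl, show B3 2 0 = 0 from rfl, show B3 2 1 = Rhad from rfl,
      show B3 2 2 = 0 from rfl]

lemma S3_closed : ∀ m : ℕ,
    Ssum B3 ρ (2*m+2) = ![(uu ρ / 2^m) • E00, 0, (if m = 0 then vv ρ else uu ρ / 2^m) • E11]
    ∧ Ssum B3 ρ (2*m+3) = ![0, (uu ρ / 2^m) • E00, 0] := by
  intro m
  induction m with
  | zero =>
    have h2 : Ssum B3 ρ (2*0+2) = ![(uu ρ / 2^0) • E00, 0,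
        (if 0 = 0 then vv ρ else uu ρ / 2^0) • E11] := by
      rw [show (2*0+2 : ℕ) = 1+1 from rfl, Ssum_succ]
      funext j
      fin_cases j <;>
        simp [S3_one, Fin.sum_univ_three, show B3 0 0 = 0 from rfl, show B3 0 1 = Lhad from rfl,
          show B3 0 2 = 0 from rfl, show B3 1 0 = 1 from rfl, show B3 1 1 = 0 from rfl,
          show B3 1 2 = 0 from rfl, show B3 2 0 = 0 from rfl, show B3 2 1 = Rhad from rfl,
          show B3 2 2 = 0 from rfl, Lconj, Rconj, uu, vv]
    refine ⟨h2, ?_⟩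
    rw [show (2*0+3 : ℕ) = (2*0+2)+1 from rfl, Ssum_succ, h2]
    funext j
    fin_cases j <;>
      simp [Fin.sum_univ_three, show B3 0 0 = 0 from rfl, show B3 0 1 = Lhad from rfl,
        show B3 0 2 = 0 from rfl, show B3 1 0 = 1 from rfl, show B3 1 1 = 0 from rfl,
        show B3 1 2 = 0 from rfl, show B3 2 0 = 0 from rfl, show B3 2 1 = Rhad from rfl,
        show B3 2 2 = 0 from rfl]
  | succ m ih =>
    have h2 : Ssum B3 ρ (2*(m+1)+2) = ![(uu ρ / 2^(m+1)) • E00, 0,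
        (if m+1 = 0 then vv ρ else uu ρ / 2^(m+1)) • E11] := by
      rw [show (2*(m+1)+2 : ℕ) = (2*m+3)+1 by ring, Ssum_succ, ih.2]
      funext j
      fin_cases j <;>
        · simp [Fin.sum_univ_three, show B3 0 0 = 0 from rfl, show B3 0 1 = Lhad from rfl,
            show B3 0 2 = 0 from rfl, show B3 1 0 = 1 from rfl, show B3 1 1 = 0 from rfl,
            show B3 1 2 = 0 from rfl, show B3 2 0 = 0 from rfl, show B3 2 1 = Rhad from rfl,
            show B3 2 2 = 0 from rfl, Lconj, Rconj, E00, mul_smul_comm, smul_mul_assoc]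
          try ring
          try (congr 1; ring)
    refine ⟨h2, ?_⟩
    rw [show (2*(m+1)+3 : ℕ) = (2*(m+1)+2)+1 by ring, Ssum_succ, h2]
    funext j
    fin_cases j <;>
      · simp [Fin.sum_univ_three, show B3 0 0 = 0 from rfl, show B3 0 1 = Lhad from rfl,
          show B3 0 2 = 0 from rfl, show B3 1 0 = 1 from rfl, show B3 1 1 = 0 from rfl,
          show B3 1 2 = 0 from rfl, show B3 2 0 = 0 from rfl, show B3 2 1 = Rhad from rfl,
          show B3 2 2 = 0 from rfl, Lconj, Rconj, E00, E11, mul_smul_comm, smul_mul_assoc]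
        try (congr 1; ring)

/-! ### Closed forms for the 4-path -/

lemma S4_one : Ssum B4 ρ 1 = ![(0 : Mn 2), ρ, 0, 0] := by
  rw [show (1:ℕ) = 0+1 from rfl, Ssum_succ]
  funext j
  fin_cases j <;>
    simp [Ssum, Fin.sum_univ_four, show B4 0 1 = Lhad from rfl, show B4 1 0 = 1 from rfl,
      show B4 2 1 = Rhad from rfl, show B4 1 2 = Lhad from rfl, show B4 3 2 = Rhad from rfl,
      show B4 0 0 = 0 from rfl, show B4 0 2 = 0 from rfl, show B4 0 3 = 0 from rfl,
      show B4 1 1 = 0 from rfl, show B4 1 3 = 0 from rfl, show B4 2 0 = 0 from rfl,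
      show B4 2 2 = 0 from rfl, show B4 2 3 = 0 from rfl, show B4 3 0 = 0 from rfl,
      show B4 3 1 = 0 from rfl, show B4 3 3 = 0 from rfl]

lemma S4_two : Ssum B4 ρ 2 = ![uu ρ • E00, 0, vv ρ • E11, 0] := by
  rw [show Ssum B4 ρ 2 = fun j => ∑ m, B4 j m * Ssum B4 ρ 1 m * (B4 j m)ᴴ from rfl]
  funext j
  fin_cases j <;>
    · simp [S4_one, Fin.sum_univ_four, show B4 0 1 = Lhad from rfl, show B4 1 0 = 1 from rfl,
        show B4 2 1 = Rhad from rfl, show B4 1 2 = Lhad from rfl, show B4 3 2 = Rhad from rfl,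
        show B4 0 0 = 0 from rfl, show B4 0 2 = 0 from rfl, show B4 0 3 = 0 from rfl,
        show B4 1 1 = 0 from rfl, show B4 1 3 = 0 from rfl, show B4 2 0 = 0 from rfl,
        show B4 2 2 = 0 from rfl, show B4 2 3 = 0 from rfl, show B4 3 0 = 0 from rfl,
        show B4 3 1 = 0 from rfl, show B4 3 3 = 0 from rfl, Lconj, Rconj, uu, vv]
      try (congr 1; ring)

lemma S4_three : Ssum B4 ρ 3 = ![0, ww ρ • E00, 0, (vv ρ / 2) • E11] := by
  rw [show Ssum B4 ρ 3 = fun j => ∑ m, B4 j m * Ssum B4 ρ 2 m * (B4 j m)ᴴ from rfl]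
  funext j
  fin_cases j <;>
    · simp [S4_two, Fin.sum_univ_four, show B4 0 1 = Lhad from rfl, show B4 1 0 = 1 from rfl,
        show B4 2 1 = Rhad from rfl, show B4 1 2 = Lhad from rfl, show B4 3 2 = Rhad from rfl,
        show B4 0 0 = 0 from rfl, show B4 0 2 = 0 from rfl, show B4 0 3 = 0 from rfl,
        show B4 1 1 = 0 from rfl, show B4 1 3 = 0 from rfl, show B4 2 0 = 0 from rfl,
        show B4 2 2 = 0 from rfl, show B4 2 3 = 0 from rfl, show B4 3 0 = 0 from rfl,
        show B4 3 1 = 0 from rfl, show B4 3 3 = 0 from rfl, Lconj, Rconj, E00, E11, ww,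
        mul_smul_comm, smul_mul_assoc]
      try (ext i j; fin_cases i <;> fin_cases j <;> simp [E00, E11] <;> ring)
      try (congr 1; ring)

lemma S4_closed : ∀ m : ℕ,
    Ssum B4 ρ (2*m+4) = ![(ww ρ / 2 * (3/4)^m) • E00, 0, (ww ρ / 2 * (3/4)^m) • E11, 0]
    ∧ Ssum B4 ρ (2*m+5) = ![0, (3/2 * (ww ρ / 2 * (3/4)^m)) • E00, 0,
        (ww ρ / 2 * (3/4)^m / 2) • E11] := by
  intro m
  induction m with
  | zero =>
    have h4 : Ssum B4 ρ (2*0+4) = ![(ww ρ / 2 * (3/4)^0) • E00, 0,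
        (ww ρ / 2 * (3/4)^0) • E11, 0] := by
      rw [show (2*0+4:ℕ) = 3+1 from rfl, Ssum_succ, S4_three]
      funext j
      fin_cases j <;>
        · simp [Fin.sum_univ_four, show B4 0 1 = Lhad from rfl, show B4 1 0 = 1 from rfl,
            show B4 2 1 = Rhad from rfl, show B4 1 2 = Lhad from rfl, show B4 3 2 = Rhad from rfl,
            show B4 0 0 = 0 from rfl, show B4 0 2 = 0 from rfl, show B4 0 3 = 0 from rfl,
            show B4 1 1 = 0 from rfl, show B4 1 3 = 0 from rfl, show B4 2 0 = 0 from rfl,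
            show B4 2 2 = 0 from rfl, show B4 2 3 = 0 from rfl, show B4 3 0 = 0 from rfl,
            show B4 3 1 = 0 from rfl, show B4 3 3 = 0 from rfl, Lconj, Rconj, E00, E11,
            mul_smul_comm, smul_mul_assoc]
          try (congr 1; ring)
    refine ⟨h4, ?_⟩
    rw [show (2*0+5:ℕ) = (2*0+4)+1 from rfl, Ssum_succ, h4]
    funext j
    fin_cases j <;>
      · simp [Fin.sum_univ_four, show B4 0 1 = Lhad from rfl, show B4 1 0 = 1 from rfl,
          show B4 2 1 = Rhad from rfl, show B4 1 2 = Lhad from rfl, show B4 3 2 = Rhad from rfl,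
          show B4 0 0 = 0 from rfl, show B4 0 2 = 0 from rfl, show B4 0 3 = 0 from rfl,
          show B4 1 1 = 0 from rfl, show B4 1 3 = 0 from rfl, show B4 2 0 = 0 from rfl,
          show B4 2 2 = 0 from rfl, show B4 2 3 = 0 from rfl, show B4 3 0 = 0 from rfl,
          show B4 3 1 = 0 from rfl, show B4 3 3 = 0 from rfl, Lconj, Rconj, E00, E11,
          mul_smul_comm, smul_mul_assoc]
        try (congr 1; ring)
  | succ m ih =>
    have h4 : Ssum B4 ρ (2*(m+1)+4) = ![(ww ρ / 2 * (3/4)^(m+1)) • E00, 0,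
        (ww ρ / 2 * (3/4)^(m+1)) • E11, 0] := by
      rw [show (2*(m+1)+4:ℕ) = (2*m+5)+1 by ring, Ssum_succ, ih.2]
      funext j
      fin_cases j <;>
        · simp [Fin.sum_univ_four, show B4 0 1 = Lhad from rfl, show B4 1 0 = 1 from rfl,
            show B4 2 1 = Rhad from rfl, show B4 1 2 = Lhad from rfl, show B4 3 2 = Rhad from rfl,
            show B4 0 0 = 0 from rfl, show B4 0 2 = 0 from rfl, show B4 0 3 = 0 from rfl,
            show B4 1 1 = 0 from rfl, show B4 1 3 = 0 from rfl, show B4 2 0 = 0 from rfl,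
            show B4 2 2 = 0 from rfl, show B4 2 3 = 0 from rfl, show B4 3 0 = 0 from rfl,
            show B4 3 1 = 0 from rfl, show B4 3 3 = 0 from rfl, Lconj, Rconj, E00, E11,
            mul_smul_comm, smul_mul_assoc]
          try (congr 1; ring)
    refine ⟨h4, ?_⟩
    rw [show (2*(m+1)+5:ℕ) = (2*(m+1)+4)+1 from rfl, Ssum_succ, h4]
    funext j
    fin_cases j <;>
      · simp [Fin.sum_univ_four, show B4 0 1 = Lhad from rfl, show B4 1 0 = 1 from rfl,
          show B4 2 1 = Rhad from rfl, show B4 1 2 = Lhad from rfl, show B4 3 2 = Rhad from rfl,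
          show B4 0 0 = 0 from rfl, show B4 0 2 = 0 from rfl, show B4 0 3 = 0 from rfl,
          show B4 1 1 = 0 from rfl, show B4 1 3 = 0 from rfl, show B4 2 0 = 0 from rfl,
          show B4 2 2 = 0 from rfl, show B4 2 3 = 0 from rfl, show B4 3 0 = 0 from rfl,
          show B4 3 1 = 0 from rfl, show B4 3 3 = 0 from rfl, Lconj, Rconj, E00, E11,
          mul_smul_comm, smul_mul_assoc]
        try (congr 1; ring)
end closed

/-! ### tsum helpers -/

lemma summable_comb (a b c0 c1 : ℂ) (x : ℂ) (hx : ‖x‖ < 1) :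
    Summable (fun k : ℕ => (a * (((k:ℕ):ℂ) * x^k) + (b * x^k +
      ((if k = 0 then c0 else 0) + (if k = 1 then c1 else 0))))) := by
  have s1 : Summable (fun k : ℕ => ((k:ℕ):ℂ) * x^k) := by
    simpa using summable_pow_mul_geometric_of_norm_lt_one 1 hx
  have s2 : Summable (fun k : ℕ => x^k) := summable_geometric_of_norm_lt_one hx
  have s3 : Summable (fun k : ℕ => if k = 0 then c0 else 0) := by
    apply summable_of_ne_finset_zero (s := {0})
    intro b hb
    simp only [Finset.mem_singleton] at hb
    simp [hb]
  have s4 : Summable (fun k : ℕ => if k = 1 then c1 else 0) := by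
    apply summable_of_ne_finset_zero (s := {1})
    intro b hb
    simp only [Finset.mem_singleton] at hb
    simp [hb]
  exact (s1.mul_left a).add ((s2.mul_left b).add (s3.add s4))

lemma tsum_comb (a b c0 c1 : ℂ) (x : ℂ) (hx : ‖x‖ < 1) :
    ∑' k : ℕ, (a * (((k:ℕ):ℂ) * x^k) + (b * x^k +
      ((if k = 0 then c0 else 0) + (if k = 1 then c1 else 0))))
    = a * (x/(1-x)^2) + b * (1-x)⁻¹ + c0 + c1 := by
  have s1 : Summable (fun k : ℕ => ((k:ℕ):ℂ) * x^k) := by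
    simpa using summable_pow_mul_geometric_of_norm_lt_one 1 hx
  have s2 : Summable (fun k : ℕ => x^k) := summable_geometric_of_norm_lt_one hx
  have s3 : Summable (fun k : ℕ => if k = 0 then c0 else 0) := by
    apply summable_of_ne_finset_zero (s := {0})
    intro b hb
    simp only [Finset.mem_singleton] at hb
    simp [hb]
  have s4 : Summable (fun k : ℕ => if k = 1 then c1 else 0) := by
    apply summable_of_ne_finset_zero (s := {1})
    intro b hb
    simp only [Finset.mem_singleton] at hb
    simp [hb]
  rw [Summable.tsum_add (s1.mul_left a) ((s2.mul_left b).add (s3.add s4)),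
    Summable.tsum_add (s2.mul_left b) (s3.add s4), Summable.tsum_add s3 s4,
    tsum_mul_left, tsum_mul_left, tsum_coe_mul_geometric_of_norm_lt_one hx,
    tsum_geometric_of_norm_lt_one hx, tsum_ite_eq, tsum_ite_eq]
  ring

/-- Mean hitting times on the 3-path and the 4-path for the split-Hadamard OQW:
`k_{31}(ρ) = 4 + 4 Re(ρ_{12})` and `k_{41}(ρ) = 9 + 4 Re(ρ_{12})` for every
density matrix `ρ`. -/
theorem mean_hitting_time_path_hadamard (ρ : Mn 2)
    (hpos : ρ.PosSemidef) (htr : ρ.trace = 1) :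
    (∑' r : ℕ, ((r + 1 : ℕ) : ℂ) * ∑ x ∈ pathsSet 3 2 0 (r+1),
        (pathProd B3 (r+1) x * ρ * (pathProd B3 (r+1) x)ᴴ).trace =
      ((4 + 4 * (ρ 0 1).re : ℝ) : ℂ)) ∧
    (∑' r : ℕ, ((r + 1 : ℕ) : ℂ) * ∑ x ∈ pathsSet 4 3 0 (r+1),
        (pathProd B4 (r+1) x * ρ * (pathProd B4 (r+1) x)ᴴ).trace =
      ((9 + 4 * (ρ 0 1).re : ℝ) : ℂ)) := by
  have h10 : ρ 1 0 = star (ρ 0 1) := (hpos.1.apply 1 0).symm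
  have htr' : ρ 0 0 + ρ 1 1 = 1 := by
    simpa [Matrix.trace_fin_two] using htr
  have hre : ρ 0 1 + star (ρ 0 1) = 2 * ((ρ 0 1).re : ℂ) := by
    rw [Complex.star_def, Complex.add_conj]
    push_cast
    ring
  have hE11tr : E11.trace = 1 := by simp [E11, Matrix.trace_fin_two]
  have hx2 : ‖(1/2 : ℂ)‖ < 1 := by norm_num
  have hx34 : ‖(3/4 : ℂ)‖ < 1 := by
    rw [show (3/4 : ℂ) = ((3/4 : ℝ) : ℂ) by norm_num, Complex.norm_real]
    rw [Real.norm_eq_abs, abs_of_nonneg (by norm_num : (0:ℝ) ≤ 3/4)]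
    norm_num
  constructor
  · -- 3-path
    have hB3 : ∀ m : Fin 3, B3 m 2 = 0 := by intro m; fin_cases m <;> rfl
    have hG : ∑' r : ℕ, ((r + 1 : ℕ) : ℂ) * ∑ x ∈ pathsSet 3 2 0 (r+1),
          (pathProd B3 (r+1) x * ρ * (pathProd B3 (r+1) x)ᴴ).trace
        = ∑' r : ℕ, ((r + 1 : ℕ) : ℂ) * (Ssum B3 ρ (r+1) 2).trace :=
      tsum_congr fun r => by
        rw [← Matrix.trace_sum, sum_pathsSet_eq B3 ρ 2 hB3 (r+1)]
    rw [hG]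
    have heven : (fun k : ℕ => ((2*k + 1 : ℕ) : ℂ) * (Ssum B3 ρ (2*k+1) 2).trace)
        = fun _ => (0:ℂ) := by
      funext k
      rcases k with _ | k
      · rw [show (2*0+1:ℕ) = 1 from rfl, S3_one]
        simp
      · rw [show (2*(k+1)+1:ℕ) = 2*k+3 by ring, (S3_closed ρ k).2]
        simp
    have hodd : (fun k : ℕ => ((2*k + 1 + 1 : ℕ) : ℂ) * (Ssum B3 ρ (2*k+1+1) 2).trace)
        = fun k : ℕ => (2*uu ρ) * (((k:ℕ):ℂ) * (1/2:ℂ)^k) + ((2*uu ρ) * (1/2:ℂ)^k +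
          ((if k = 0 then 2*vv ρ - 2*uu ρ else 0) + (if k = 1 then 0 else 0))) := by
      funext k
      rw [show (2*k+1+1:ℕ) = 2*k+2 by ring, (S3_closed ρ k).1]
      rcases k with _ | k
      · simp [Matrix.trace_smul, hE11tr] <;> push_cast <;> ring
      · simp [Matrix.trace_smul, hE11tr] <;> push_cast <;> ring
    have he : Summable (fun k : ℕ => ((2*k + 1 : ℕ) : ℂ) * (Ssum B3 ρ (2*k+1) 2).trace) := by
      rw [heven]; exact summable_zero
    have ho : Summable (fun k : ℕ => ((2*k + 1 + 1 : ℕ) : ℂ) * (Ssum B3 ρ (2*k+1+1) 2).trace) := by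
      rw [hodd]; exact summable_comb _ _ _ _ _ hx2
    rw [← tsum_even_add_odd
      (f := fun r : ℕ => ((r + 1 : ℕ) : ℂ) * (Ssum B3 ρ (r+1) 2).trace) he ho]
    rw [heven, hodd, tsum_zero, tsum_comb _ _ _ _ _ hx2]
    push_cast
    simp only [uu, vv]
    linear_combination 4*htr' + 2*h10 + 2*hre
  · -- 4-path
    have hB4 : ∀ m : Fin 4, B4 m 3 = 0 := by intro m; fin_cases m <;> rfl
    have hG : ∑' r : ℕ, ((r + 1 : ℕ) : ℂ) * ∑ x ∈ pathsSet 4 3 0 (r+1),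
          (pathProd B4 (r+1) x * ρ * (pathProd B4 (r+1) x)ᴴ).trace
        = ∑' r : ℕ, ((r + 1 : ℕ) : ℂ) * (Ssum B4 ρ (r+1) 3).trace :=
      tsum_congr fun r => by
        rw [← Matrix.trace_sum, sum_pathsSet_eq B4 ρ 3 hB4 (r+1)]
    rw [hG]
    have heven : (fun k : ℕ => ((2*k + 1 : ℕ) : ℂ) * (Ssum B4 ρ (2*k+1) 3).trace)
        = fun k : ℕ => (2*(4*ww ρ/9)) * (((k:ℕ):ℂ) * (3/4:ℂ)^k) + ((4*ww ρ/9) * (3/4:ℂ)^k +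
          ((if k = 0 then -(4*ww ρ/9) else 0) +
            (if k = 1 then 3*vv ρ/2 - 9*(4*ww ρ/9)/4 else 0))) := by
      funext k
      rcases k with _ | _ | m
      · rw [show (2*0+1:ℕ) = 1 from rfl, S4_one]
        simp
      · rw [show (2*1+1:ℕ) = 3 from rfl, S4_three]
        simp [Matrix.trace_smul, hE11tr] <;> push_cast <;> ring
      · rw [show (2*(m+2)+1:ℕ) = 2*m+5 by ring, (S4_closed ρ m).2]
        simp [Matrix.trace_smul, hE11tr] <;> push_cast <;> ring
    have hodd : (fun k : ℕ => ((2*k + 1 + 1 : ℕ) : ℂ) * (Ssum B4 ρ (2*k+1+1) 3).trace)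
        = fun _ => (0:ℂ) := by
      funext k
      rcases k with _ | m
      · rw [show (2*0+1+1:ℕ) = 2 from rfl, S4_two]
        simp
      · rw [show (2*(m+1)+1+1:ℕ) = 2*m+4 by ring, (S4_closed ρ m).1]
        simp
    have he : Summable (fun k : ℕ => ((2*k + 1 : ℕ) : ℂ) * (Ssum B4 ρ (2*k+1) 3).trace) := by
      rw [heven]; exact summable_comb _ _ _ _ _ hx34
    have ho : Summable (fun k : ℕ => ((2*k + 1 + 1 : ℕ) : ℂ) * (Ssum B4 ρ (2*k+1+1) 3).trace) := by
      rw [hodd]; exact summable_zero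
    rw [← tsum_even_add_odd
      (f := fun r : ℕ => ((r + 1 : ℕ) : ℂ) * (Ssum B4 ρ (r+1) 3).trace) he ho]
    rw [heven, hodd, tsum_zero, tsum_comb _ _ _ _ _ hx34]
    push_cast
    simp only [uu, vv, ww]
    linear_combination 9*htr' + 2*h10 + 2*hre

end
end

section
/- Let x, y, z, w ∈ ℂ, L = [[x, y],[0, 0]] and R = [[0, 0],[z, w]] in M_2(ℂ), and let ρ ∈ M_2(ℂ) be Hermitian with entries ρ_{11}, ρ_{12}, ρ_{22}. Then for every n ≥ 1: Tr(L^n ρ (Lᴴ)^n) = |x|^{2(n−1)}·(ρ_{11}|x|² + 2·Re(ρ_{12}·x·conj(y)) + ρ_{22}|y|²) and Tr(R^n ρ (Rᴴ)^n) = |w|^{2(n−1)}·(ρ_{11}|z|² + 2·Re(ρ_{12}·z·conj(w)) + ρ_{22}|w|²). -/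
open Matrix

lemma row_powL (a b : ℂ) (hab : !![a, b; (0:ℂ), 0] * !![a, b; (0:ℂ), 0] = a • !![a, b; (0:ℂ), 0]) :
    ∀ n : ℕ, 1 ≤ n → (!![a, b; (0:ℂ), 0]) ^ n = a ^ (n - 1) • !![a, b; (0:ℂ), 0] := by
  intro n hn
  induction n with
  | zero => omega
  | succ m ih =>
    rcases Nat.eq_or_lt_of_le hn with h | h
    · simp [← h]
    · have hm : 1 ≤ m := by omega
      have hm' : m - 1 + 1 = m := by omega
      rw [pow_succ, ih hm, smul_mul_assoc, hab, smul_smul, ← pow_succ, hm']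
      simp

lemma row_powR (a b : ℂ) (hab : !![(0:ℂ), 0; a, b] * !![(0:ℂ), 0; a, b] = b • !![(0:ℂ), 0; a, b]) :
    ∀ n : ℕ, 1 ≤ n → (!![(0:ℂ), 0; a, b]) ^ n = b ^ (n - 1) • !![(0:ℂ), 0; a, b] := by
  intro n hn
  induction n with
  | zero => omega
  | succ m ih =>
    rcases Nat.eq_or_lt_of_le hn with h | h
    · simp [← h]
    · have hm : 1 ≤ m := by omega
      have hm' : m - 1 + 1 = m := by omega
      rw [pow_succ, ih hm, smul_mul_assoc, hab, smul_smul, ← pow_succ, hm']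
      simp

lemma trace_L (x y : ℂ) (ρ : Matrix (Fin 2) (Fin 2) ℂ) (h : ρ 1 0 = starRingEnd ℂ (ρ 0 1)) :
    (!![x, y; 0, 0] * ρ * (!![x, y; 0, 0])ᴴ).trace =
      ρ 0 0 * ((‖x‖ ^ 2 : ℝ) : ℂ) + 2 * (((ρ 0 1 * x * starRingEnd ℂ y).re : ℝ) : ℂ)
        + ρ 1 1 * ((‖y‖ ^ 2 : ℝ) : ℂ) := by
  have e1 : (!![x, y; 0, 0] * ρ * (!![x, y; 0, 0])ᴴ).trace =
      ρ 0 0 * (x * starRingEnd ℂ x)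
        + (ρ 0 1 * x * starRingEnd ℂ y + starRingEnd ℂ (ρ 0 1 * x * starRingEnd ℂ y))
        + ρ 1 1 * (y * starRingEnd ℂ y) := by
    simp [Matrix.trace_fin_two, Matrix.mul_apply, Fin.sum_univ_two, Matrix.conjTranspose_apply,
      Matrix.vecMul, dotProduct, h, _root_.map_mul]
    ring
  rw [e1, Complex.add_conj, Complex.mul_conj, Complex.mul_conj]
  simp [Complex.normSq_eq_norm_sq]

lemma trace_R (z w : ℂ) (ρ : Matrix (Fin 2) (Fin 2) ℂ) (h : ρ 1 0 = starRingEnd ℂ (ρ 0 1)) :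
    (!![(0:ℂ), 0; z, w] * ρ * (!![(0:ℂ), 0; z, w])ᴴ).trace =
      ρ 0 0 * ((‖z‖ ^ 2 : ℝ) : ℂ) + 2 * (((ρ 0 1 * z * starRingEnd ℂ w).re : ℝ) : ℂ)
        + ρ 1 1 * ((‖w‖ ^ 2 : ℝ) : ℂ) := by
  have e1 : (!![(0:ℂ), 0; z, w] * ρ * (!![(0:ℂ), 0; z, w])ᴴ).trace =
      ρ 0 0 * (z * starRingEnd ℂ z)
        + (ρ 0 1 * z * starRingEnd ℂ w + starRingEnd ℂ (ρ 0 1 * z * starRingEnd ℂ w))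
        + ρ 1 1 * (w * starRingEnd ℂ w) := by
    simp [Matrix.trace_fin_two, Matrix.mul_apply, Fin.sum_univ_two, Matrix.conjTranspose_apply,
      Matrix.vecMul, dotProduct, h, _root_.map_mul]
    ring
  rw [e1, Complex.add_conj, Complex.mul_conj, Complex.mul_conj]
  simp [Complex.normSq_eq_norm_sq]

lemma coef_eq (a : ℂ) (n : ℕ) :
    a ^ (n - 1) * star (a ^ (n - 1)) = ((‖a‖ ^ (2 * (n - 1)) : ℝ) : ℂ) := by
  rw [show (star (a ^ (n - 1)) : ℂ) = starRingEnd ℂ (a ^ (n - 1)) from rfl, Complex.mul_conj]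
  norm_cast
  simp [map_pow, Complex.normSq_eq_norm_sq, pow_mul]

/-- Trace pattern for powers of the row matrices `L = [[x,y],[0,0]]` and
`R = [[0,0],[z,w]]`: for every Hermitian `ρ` and every `n ≥ 1`,
`Tr(Lⁿ ρ (Lᴴ)ⁿ) = |x|^{2(n-1)} (ρ_{11}|x|² + 2 Re(ρ_{12} x ȳ) + ρ_{22}|y|²)` and
`Tr(Rⁿ ρ (Rᴴ)ⁿ) = |w|^{2(n-1)} (ρ_{11}|z|² + 2 Re(ρ_{12} z w̄) + ρ_{22}|w|²)`. -/
theorem row_matrix_power_trace (x y z w : ℂ)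
    (ρ : Matrix (Fin 2) (Fin 2) ℂ) (hherm : ρ.IsHermitian) :
    ∀ n : ℕ, 1 ≤ n →
      ((!![x, y; 0, 0] : Matrix (Fin 2) (Fin 2) ℂ) ^ n * ρ *
          ((!![x, y; 0, 0] : Matrix (Fin 2) (Fin 2) ℂ)ᴴ) ^ n).trace =
        ((‖x‖ ^ (2 * (n - 1)) : ℝ) : ℂ) *
          (ρ 0 0 * ((‖x‖ ^ 2 : ℝ) : ℂ) +
            2 * (((ρ 0 1 * x * starRingEnd ℂ y).re : ℝ) : ℂ) +
            ρ 1 1 * ((‖y‖ ^ 2 : ℝ) : ℂ)) ∧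
      ((!![0, 0; z, w] : Matrix (Fin 2) (Fin 2) ℂ) ^ n * ρ *
          ((!![0, 0; z, w] : Matrix (Fin 2) (Fin 2) ℂ)ᴴ) ^ n).trace =
        ((‖w‖ ^ (2 * (n - 1)) : ℝ) : ℂ) *
          (ρ 0 0 * ((‖z‖ ^ 2 : ℝ) : ℂ) +
            2 * (((ρ 0 1 * z * starRingEnd ℂ w).re : ℝ) : ℂ) +
            ρ 1 1 * ((‖w‖ ^ 2 : ℝ) : ℂ)) := by
  have hρ : ρ 1 0 = starRingEnd ℂ (ρ 0 1) := by
    have := congrFun (congrFun hherm.eq 1) 0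
    simpa [Matrix.conjTranspose_apply] using this.symm
  have hL : !![x, y; (0:ℂ), 0] * !![x, y; (0:ℂ), 0] = x • !![x, y; (0:ℂ), 0] := by
    ext i j
    fin_cases i <;> fin_cases j <;>
      simp [Matrix.mul_apply, Fin.sum_univ_two]
  have hR : !![(0:ℂ), 0; z, w] * !![(0:ℂ), 0; z, w] = w • !![(0:ℂ), 0; z, w] := by
    ext i j
    fin_cases i <;> fin_cases j <;>
      simp [Matrix.mul_apply, Fin.sum_univ_two, mul_comm]
  intro n hn
  constructor
  · rw [← Matrix.conjTranspose_pow, row_powL x y hL n hn, Matrix.conjTranspose_smul,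
      smul_mul_assoc, smul_mul_assoc, mul_smul_comm, Matrix.trace_smul, Matrix.trace_smul,
      smul_eq_mul, smul_eq_mul, ← mul_assoc, coef_eq, trace_L x y ρ hρ]
  · rw [← Matrix.conjTranspose_pow, row_powR z w hR n hn, Matrix.conjTranspose_smul,
      smul_mul_assoc, smul_mul_assoc, mul_smul_comm, Matrix.trace_smul, Matrix.trace_smul,
      smul_eq_mul, smul_eq_mul, ← mul_assoc, coef_eq, trace_R z w ρ hρ]
end
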